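/- Let f : ℝ ⇉ ℝ be defined by f(s) = {sign(s)} for s ≠ 0 and f(0) = {-1, 1}, and define F : ℝ^n ⇉ ℝ^n by F(x) = { (1/2)·(f(x_1), ..., f(x_n)), (f(x_1), ..., f(x_n)) }, i.e., F(x) = { c·u : c ∈ {1/2, 1}, u_j ∈ f(x_j) for all j }. Then F has compact nonempty values, satisfies the Weak Componentwise Monotonicity condition, and is not monotone. -/

import Mathlib

/-- `f s = {sign s}` for `s ≠ 0`, and `f 0 = {-1, 1}`. -/
noncomputable def signSet (s : ℝ) : Set ℝ := if s = 0 then {-1, 1} else {Real.sign s}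

lemma signSet_of_neg {s : ℝ} (h : s < 0) : signSet s = {-1} := by
  simp [signSet, h.ne, Real.sign_of_neg h]

lemma signSet_of_pos {s : ℝ} (h : 0 < s) : signSet s = {1} := by
  simp [signSet, h.ne', Real.sign_of_pos h]

lemma signSet_pm {s a : ℝ} (ha : a ∈ signSet s) : a = -1 ∨ a = 1 := by
  rcases lt_trichotomy s 0 with h | rfl | h
  · rw [signSet_of_neg h] at ha; simp_all
  · simpa [signSet] using ha
  · rw [signSet_of_pos h] at ha; simp_all

lemma signSet_finite (s : ℝ) : (signSet s).Finite := by
  unfold signSet; split <;> simp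

lemma one_mem_signSet_zero : (1 : ℝ) ∈ signSet 0 := by simp [signSet]

lemma scalar_wcm (s t a : ℝ) (ha : a ∈ signSet s) :
    ∃ b ∈ signSet t, 0 ≤ (s - t) * (a - b) := by
  rcases lt_trichotomy s t with h | rfl | h
  · -- s < t : pick maximal b in signSet t
    rcases lt_trichotomy t 0 with ht | rfl | ht
    · have hs : s < 0 := h.trans ht
      rw [signSet_of_neg hs] at ha
      refine ⟨-1, by rw [signSet_of_neg ht]; rfl, ?_⟩
      simp_all
    · refine ⟨1, by simp [signSet], ?_⟩
      rcases signSet_pm ha with rfl | rfl <;> nlinarith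
    · refine ⟨1, by rw [signSet_of_pos ht]; rfl, ?_⟩
      rcases signSet_pm ha with rfl | rfl <;> nlinarith
  · exact ⟨a, ha, by simp⟩
  · -- s > t : pick minimal b in signSet t
    rcases lt_trichotomy t 0 with ht | rfl | ht
    · refine ⟨-1, by rw [signSet_of_neg ht]; rfl, ?_⟩
      rcases signSet_pm ha with rfl | rfl <;> nlinarith
    · refine ⟨-1, by simp [signSet], ?_⟩
      rcases signSet_pm ha with rfl | rfl <;> nlinarith
    · have hs : 0 < s := ht.trans h
      rw [signSet_of_pos hs] at ha
      refine ⟨1, by rw [signSet_of_pos ht]; rfl, ?_⟩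
      simp_all

theorem example_multidim_compact_wcm_not_monotone (n : ℕ) (hn : 1 ≤ n) :
    ∀ F : EuclideanSpace ℝ (Fin n) → Set (EuclideanSpace ℝ (Fin n)),
    (F = fun x => {v | ∃ c ∈ ({1/2, 1} : Set ℝ), ∃ u : EuclideanSpace ℝ (Fin n),
                      (∀ j, u j ∈ signSet (x j)) ∧ v = c • u}) →
    (∀ x, (F x).Nonempty ∧ IsCompact (F x)) ∧
    (∀ x y, ∀ v ∈ F x, ∃ w ∈ F y, ∀ j : Fin n, 0 ≤ (x j - y j) * (v j - w j)) ∧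
    (∃ x y, ∃ v ∈ F x, ∃ w ∈ F y, (inner ℝ (x - y) (v - w) : ℝ) < 0) := by
  intro F hF
  subst hF
  refine ⟨?_, ?_, ?_⟩
  · -- nonempty and compact
    intro x
    constructor
    · refine ⟨(1:ℝ) • ((WithLp.equiv 2 (Fin n → ℝ)).symm
        (fun j => if x j = 0 then 1 else Real.sign (x j))), 1, by norm_num, _, ?_, rfl⟩
      intro j
      by_cases h : x j = 0 <;> simp [signSet, h]
    · have h2 : (Set.univ.pi fun j => signSet (x j) : Set (Fin n → ℝ)).Finite :=
        Set.Finite.pi fun j => signSet_finite _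
      have h1 : ({1/2, 1} : Set ℝ).Finite := (Set.finite_singleton (1:ℝ)).insert _
      have hfin := (h1.prod h2).image
        (fun p : ℝ × (Fin n → ℝ) =>
          (p.1 • (WithLp.equiv 2 (Fin n → ℝ)).symm p.2 : EuclideanSpace ℝ (Fin n)))
      apply Set.Finite.isCompact
      apply hfin.subset
      rintro v ⟨c, hc, u, hu, rfl⟩
      exact ⟨(c, fun j => u j), ⟨hc, by simpa [Set.mem_pi] using hu⟩, rfl⟩
  · -- WCM
    rintro x y v ⟨c, hc, u, hu, rfl⟩
    have hc0 : (0:ℝ) ≤ c := by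
      rcases hc with rfl | rfl <;> norm_num
    classical
    set u' : EuclideanSpace ℝ (Fin n) :=
      (WithLp.equiv 2 (Fin n → ℝ)).symm
        (fun j => Classical.choose (scalar_wcm (x j) (y j) (u j) (hu j))) with hu'
    refine ⟨c • u', ⟨c, hc, u', fun j =>
      (Classical.choose_spec (scalar_wcm (x j) (y j) (u j) (hu j))).1, rfl⟩, ?_⟩
    intro j
    have hspec := (Classical.choose_spec (scalar_wcm (x j) (y j) (u j) (hu j))).2
    have huj : u' j = Classical.choose (scalar_wcm (x j) (y j) (u j) (hu j)) := rfl
    have hsmul : (c • u) j = c * u j := rfl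
    have hsmul' : (c • u') j = c * u' j := rfl
    rw [hsmul, hsmul', huj]
    nlinarith [mul_nonneg hc0 hspec]
  · -- not monotone
    classical
    set i0 : Fin n := ⟨0, hn⟩ with hi0
    set u : EuclideanSpace ℝ (Fin n) := (WithLp.equiv 2 (Fin n → ℝ)).symm (fun _ => 1) with hu
    set x : EuclideanSpace ℝ (Fin n) := EuclideanSpace.single i0 (1:ℝ) with hx
    have humem : ∀ w : EuclideanSpace ℝ (Fin n), ∀ j, u j ∈ signSet (w j) ∨ True := fun _ _ => Or.inr trivial
    refine ⟨x, 0, (1/2 : ℝ) • u, ⟨1/2, by norm_num, u, ?_, rfl⟩,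
      u, ⟨1, by norm_num, u, ?_, (one_smul ℝ u).symm⟩, ?_⟩
    · intro j
      by_cases h : j = i0
      · subst h
        simp [hx, signSet, hu, EuclideanSpace.single_apply]
      · have : x j = 0 := by simp [hx, EuclideanSpace.single_apply, h]
        rw [this]
        have : u j = 1 := rfl
        rw [this]; exact one_mem_signSet_zero
    · intro j
      have h0 : (0 : EuclideanSpace ℝ (Fin n)) j = 0 := rfl
      have : u j = 1 := rfl
      rw [h0, this]; exact one_mem_signSet_zero
    · have : (inner ℝ (x - 0) ((1/2 : ℝ) • u - u) : ℝ) = -(1/2) := by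
        rw [sub_zero]
        rw [PiLp.inner_apply]
        have : ∀ j : Fin n, (inner ℝ (x j) (((1/2 : ℝ) • u - u) j) : ℝ) =
            (if j = i0 then (1:ℝ) else 0) * (-(1/2)) := by
          intro j
          have h1 : ((1/2 : ℝ) • u - u) j = (1/2 : ℝ) * u j - u j := rfl
          have h2 : u j = 1 := rfl
          have h3 : x j = if j = i0 then (1:ℝ) else 0 := by
            simp [hx, EuclideanSpace.single_apply]
          rw [RCLike.inner_apply, h1, h2, h3]
          split_ifs <;> norm_num
        rw [Finset.sum_congr rfl fun j _ => this j]
        simp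
      rw [this]; norm_num
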